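/- Let 1 <= s <= t and 0 <= g <= s. Let A be the set of vertices a_{s-1}...a_{s-g} followed by s-g+t+1 zeros (so the last s-g+t+1 bits are 0 and the top g a-bits are free) in LeTQ(s,t). Then the open neighborhood N(A) has exactly 2^g(s-g+1) vertices and the closed neighborhood N[A] has exactly 2^g(s-g+2) vertices. -/

import Mathlib

/-- Flip bit `k` of the binary string `x`. -/
def bflip {n : ℕ} (x : Fin n → Bool) (k : Fin n) : Fin n → Bool :=
  Function.update x k (!(x k))

/-- Locally twisted cube adjacency on `n`-bit binary strings:
either flip bit `k` for some `k ≤ 1`; or, for some `k ≥ 2`, flip bits `k` and `k-1`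
when bit 0 is `1`, resp. flip only bit `k` when bit 0 is `0`. -/
def cubeAdj (n : ℕ) (x y : Fin n → Bool) : Prop :=
  (∃ k : Fin n, (k : ℕ) ≤ 1 ∧ y = bflip x k) ∨
  (∃ k : Fin n, 2 ≤ (k : ℕ) ∧
    ((∃ h0 : 0 < n, x ⟨0, h0⟩ = true ∧
        y = bflip (bflip x k) ⟨(k : ℕ) - 1, lt_of_le_of_lt (Nat.sub_le _ _) k.isLt⟩) ∨
     (∃ h0 : 0 < n, x ⟨0, h0⟩ = false ∧ y = bflip x k)))

/-- The locally twisted cube `LTQ_n`. -/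
def LTQ (n : ℕ) : SimpleGraph (Fin n → Bool) where
  Adj x y := x ≠ y ∧ (cubeAdj n x y ∨ cubeAdj n y x)
  symm := ⟨fun _ _ h => ⟨h.1.symm, h.2.symm⟩⟩
  loopless := ⟨fun _ h => h.1 rfl⟩

/-- A vertex of `LeTQ(s,t)`: the `a`-bits, the `b`-bits and the bit `c`. -/
abbrev LeTQVert (s t : ℕ) := (Fin s → Bool) × (Fin t → Bool) × Bool

/-- One-sided adjacency condition of the locally exchanged twisted cube. -/
def LeTQAdjOne (s t : ℕ) (u v : LeTQVert s t) : Prop :=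
  (u.1 = v.1 ∧ u.2.1 = v.2.1 ∧ u.2.2 = !v.2.2) ∨
  (u.2.2 = true ∧ v.2.2 = true ∧ u.1 = v.1 ∧ cubeAdj t u.2.1 v.2.1) ∨
  (u.2.2 = false ∧ v.2.2 = false ∧ u.2.1 = v.2.1 ∧ cubeAdj s u.1 v.1)

/-- The locally exchanged twisted cube `LeTQ(s,t)`. -/
def LeTQ (s t : ℕ) : SimpleGraph (LeTQVert s t) where
  Adj u v := u ≠ v ∧ (LeTQAdjOne s t u v ∨ LeTQAdjOne s t v u)
  symm := ⟨fun _ _ h => ⟨h.1.symm, h.2.symm⟩⟩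
  loopless := ⟨fun _ h => h.1 rfl⟩

/-- The open neighborhood of a vertex set. -/
def setNbhd {V : Type*} (G : SimpleGraph V) (A : Set V) : Set V :=
  {v | v ∉ A ∧ ∃ u ∈ A, G.Adj u v}

-- auxiliary development
lemma bflip_bflip {n : ℕ} (x : Fin n → Bool) (k : Fin n) : bflip (bflip x k) k = x := by
  funext i
  by_cases h : i = k
  · subst h; simp [bflip]
  · simp [bflip, Function.update_of_ne h]

lemma bflip_same {n : ℕ} (x : Fin n → Bool) (k : Fin n) : bflip x k k = !(x k) := by
  simp [bflip]

lemma bflip_noteq {n : ℕ} (x : Fin n → Bool) (k i : Fin n) (h : i ≠ k) : bflip x k i = x i := by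
  simp [bflip, Function.update_of_ne h]

def SA (s t g : ℕ) : Set (LeTQVert s t) :=
  {u | (∀ j : Fin s, (j : ℕ) < s - g → u.1 j = false) ∧
       (∀ j : Fin t, u.2.1 j = false) ∧ u.2.2 = false}

def enc (s g : ℕ) (w : Fin g → Bool) (j : ℕ) : Fin s → Bool :=
  fun i => if h : s - g ≤ (i : ℕ) then w ⟨(i : ℕ) - (s - g), by omega⟩
           else decide ((i : ℕ) = j)

def fvert (s t g : ℕ) (w : Fin g → Bool) (j : ℕ) : LeTQVert s t :=
  (enc s g w j, fun _ => false, decide (j = s - g))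

lemma enc_top (s g : ℕ) (w : Fin g → Bool) (j : ℕ) (i : Fin s) (h : s - g ≤ (i : ℕ)) :
    enc s g w j i = w ⟨(i : ℕ) - (s - g), by omega⟩ := by
  simp only [enc]; rw [dif_pos h]

lemma enc_low (s g : ℕ) (w : Fin g → Bool) (j : ℕ) (i : Fin s) (h : (i : ℕ) < s - g) :
    enc s g w j i = decide ((i : ℕ) = j) := by
  simp only [enc]; rw [dif_neg (by omega)]

lemma enc_w_eq (s g : ℕ) (hg : g ≤ s) {w w' : Fin g → Bool} {j j' : ℕ}
    (h : enc s g w j = enc s g w' j') : w = w' := by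
  funext i'
  have hlt : (i' : ℕ) + (s - g) < s := by omega
  have := congrFun h ⟨(i' : ℕ) + (s - g), hlt⟩
  rw [enc_top s g w j _ (by simp), enc_top s g w' j' _ (by simp)] at this
  have hi : ((i' : ℕ) + (s - g) - (s - g)) = (i' : ℕ) := by omega
  simpa [hi] using this

lemma mem_range_flip (s t g : ℕ) (hg : g ≤ s) {u v : Fin s → Bool}
    (hu : ∀ j : Fin s, (j : ℕ) < s - g → u j = false) (k : Fin s) (hk : (k : ℕ) < s - g)
    (hv : v = bflip u k) :
    fvert s t g (fun i => v ⟨(i : ℕ) + (s - g), by omega⟩) (k : ℕ)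
      = (v, fun _ => false, false) := by
  subst hv
  simp only [fvert]
  refine Prod.ext ?_ (Prod.ext rfl ?_)
  · funext i
    dsimp only
    by_cases hi : s - g ≤ (i : ℕ)
    · rw [enc_top s g _ _ _ hi]
      show bflip u k ⟨(i : ℕ) - (s - g) + (s - g), _⟩ = bflip u k i
      congr 1
      simp only [Fin.ext_iff, Fin.val_mk]
      omega
    · rw [enc_low s g _ _ _ (by omega)]
      by_cases hik : i = k
      · subst hik
        rw [bflip_same, hu i (by omega)]
        simp
      · rw [bflip_noteq _ _ _ hik, hu i (by omega)]
        have : (i : ℕ) ≠ (k : ℕ) := fun h => hik (Fin.ext h)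
        simp [this]
  · show decide ((k : ℕ) = s - g) = false
    simp; omega

lemma mem_range_zero (s t g : ℕ) (hg : g ≤ s) {v : Fin s → Bool}
    (hv : ∀ j : Fin s, (j : ℕ) < s - g → v j = false) (j : ℕ) (hj : s - g ≤ j) :
    fvert s t g (fun i => v ⟨(i : ℕ) + (s - g), by omega⟩) j
      = (v, fun _ => false, decide (j = s - g)) := by
  simp only [fvert]
  refine Prod.ext ?_ (Prod.ext rfl rfl)
  funext i
  dsimp only
  by_cases hi : s - g ≤ (i : ℕ)
  · rw [enc_top s g _ _ _ hi]
    show v ⟨(i : ℕ) - (s - g) + (s - g), _⟩ = v i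
    congr 1
    simp only [Fin.ext_iff, Fin.val_mk]
    omega
  · rw [enc_low s g _ _ _ (by omega), hv i (by omega)]
    have : (i : ℕ) ≠ j := by omega
    simp [this]


abbrev NRange (s t g : ℕ) : Set (LeTQVert s t) :=
  Set.range (fun p : (Fin g → Bool) × Fin (s - g + 1) => fvert s t g p.1 (p.2 : ℕ))

lemma top_case (s t g : ℕ) (hg : g ≤ s) {v : LeTQVert s t}
    (hv1 : ∀ j : Fin s, (j : ℕ) < s - g → v.1 j = false)
    (hvb : ∀ j : Fin t, v.2.1 j = false) (hc : v.2.2 = true) :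
    v ∈ NRange s t g := by
  refine ⟨(fun i => v.1 ⟨(i : ℕ) + (s - g), by omega⟩, ⟨s - g, by omega⟩), ?_⟩
  refine (mem_range_zero s t g hg hv1 (s - g) le_rfl).trans ?_
  refine Prod.ext rfl (Prod.ext (funext fun j => (hvb j).symm) ?_)
  show decide (s - g = s - g) = v.2.2
  rw [hc]; simp

lemma flip_case (s t g : ℕ) (hg : g ≤ s) {u v : LeTQVert s t}
    (hu1 : ∀ j : Fin s, (j : ℕ) < s - g → u.1 j = false)
    (hvb : ∀ j : Fin t, v.2.1 j = false) (hc2 : v.2.2 = false)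
    (hvA : v ∉ SA s t g) (k : Fin s) (hbf : v.1 = bflip u.1 k) :
    v ∈ NRange s t g := by
  by_cases hks : (k : ℕ) < s - g
  · refine ⟨(fun i => v.1 ⟨(i : ℕ) + (s - g), by omega⟩, ⟨(k : ℕ), by omega⟩), ?_⟩
    refine (mem_range_flip s t g hg hu1 k hks hbf).trans ?_
    exact Prod.ext rfl (Prod.ext (funext fun j => (hvb j).symm) hc2.symm)
  · exfalso
    apply hvA
    refine ⟨?_, hvb, hc2⟩
    intro j hj
    rw [hbf, bflip_noteq _ _ _ (by intro he; rw [he] at hj; omega)]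
    exact hu1 j hj

lemma nbhd_eq (s t g : ℕ) (hs : 1 ≤ s) (hg : g ≤ s) :
    setNbhd (LeTQ s t) (SA s t g) =
      Set.range (fun p : (Fin g → Bool) × Fin (s - g + 1) => fvert s t g p.1 (p.2 : ℕ)) := by
  show _ = NRange s t g
  ext v
  constructor
  · rintro ⟨hvA, u, huA, hadj⟩
    obtain ⟨hu1, hu2, hu3⟩ := huA
    obtain ⟨hne, hone | hone⟩ := hadj
    · rcases hone with ⟨ha, hb, hc⟩ | ⟨hd, -⟩ | ⟨-, hc2, hc3, hcube⟩
      · -- c-flip from u to v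
        have hc2 : v.2.2 = true := by rw [hu3] at hc; simpa using hc.symm
        refine top_case s t g hg (fun j hj => ?_) (fun j => ?_) hc2
        · rw [← ha]; exact hu1 j hj
        · rw [← hb]; exact hu2 j
      · rw [hu3] at hd; exact absurd hd (by simp)
      · have hvb : ∀ j : Fin t, v.2.1 j = false := fun j => by
          rw [← hc3]; exact hu2 j
        have hm : 0 < s - g := by
          by_contra h
          exact hvA ⟨fun j hj => by omega, hvb, hc2⟩
        rcases hcube with ⟨k, -, hbf⟩ | ⟨k, hk2, ⟨h0, htrue, -⟩ | ⟨h0, -, hbf⟩⟩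
        · exact flip_case s t g hg hu1 hvb hc2 hvA k hbf
        · have : u.1 ⟨0, h0⟩ = false := hu1 _ hm
          rw [this] at htrue; exact absurd htrue (by simp)
        · exact flip_case s t g hg hu1 hvb hc2 hvA k hbf
    · rcases hone with ⟨ha, hb, hc⟩ | ⟨-, hd, -⟩ | ⟨hc1, hc2, hc3, hcube⟩
      · -- c-flip from v to u
        have hc2 : v.2.2 = true := by rw [hu3] at hc; simpa using hc
        refine top_case s t g hg (fun j hj => ?_) (fun j => ?_) hc2
        · rw [ha]; exact hu1 j hj
        · rw [hb]; exact hu2 j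
      · rw [hu3] at hd; exact absurd hd (by simp)
      · have hvb : ∀ j : Fin t, v.2.1 j = false := fun j =>
          (congrFun hc3 j).trans (hu2 j)
        have hm : 0 < s - g := by
          by_contra h
          exact hvA ⟨fun j hj => by omega, hvb, hc1⟩
        rcases hcube with ⟨k, -, hbf⟩ | ⟨k, hk2, ⟨h0, htrue, hdb⟩ | ⟨h0, -, hbf⟩⟩
        · exact flip_case s t g hg hu1 hvb hc1 hvA k
            (by rw [hbf, bflip_bflip])
        · exfalso
          have h1 : u.1 ⟨0, h0⟩ = v.1 ⟨0, h0⟩ := by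
            rw [hdb, bflip_noteq _ _ _ (by simp only [ne_eq, Fin.mk.injEq]; omega),
              bflip_noteq _ _ _ (by simp only [ne_eq, Fin.ext_iff, Fin.val_mk]; omega)]
          rw [hu1 _ hm] at h1
          rw [htrue] at h1
          exact absurd h1 (by simp)
        · exact flip_case s t g hg hu1 hvb hc1 hvA k
            (by rw [hbf, bflip_bflip])
  · rintro ⟨⟨w, j⟩, rfl⟩
    by_cases hj : (j : ℕ) = s - g
    · -- the c = true vertex
      refine ⟨?_, (enc s g w (j : ℕ), fun _ => false, false),
        ⟨fun i hi => ?_, fun _ => rfl, rfl⟩, ?_, Or.inl (Or.inl ⟨rfl, rfl, ?_⟩)⟩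
      · intro hmem
        have h2 := hmem.2.2
        simp only [fvert] at h2
        rw [hj] at h2; simp at h2
      · show enc s g w (j : ℕ) i = false
        rw [enc_low s g _ _ _ hi]; simp; omega
      · intro he
        have h2 := congrArg (fun x => x.2.2) he
        simp only [fvert] at h2
        rw [hj] at h2; simp at h2
      · show false = !(decide ((j : ℕ) = s - g))
        rw [hj]; simp
    · have hjlt : (j : ℕ) < s - g := by have := j.isLt; omega
      have hbit : enc s g w (j : ℕ) ⟨(j : ℕ), by omega⟩ = true := by
        rw [enc_low s g _ _ _ hjlt]; simp
      refine ⟨?_, (bflip (enc s g w (j : ℕ)) ⟨(j : ℕ), by omega⟩, fun _ => false, false),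
        ⟨fun i hi => ?_, fun _ => rfl, rfl⟩, ?_,
        Or.inl (Or.inr (Or.inr ⟨rfl, ?_, rfl, ?_⟩))⟩
      · intro hmem
        have h2 := hmem.1 ⟨(j : ℕ), by omega⟩ hjlt
        simp only [fvert] at h2
        rw [hbit] at h2; exact absurd h2 (by simp)
      · show bflip (enc s g w (j : ℕ)) ⟨(j : ℕ), by omega⟩ i = false
        by_cases hij : i = (⟨(j : ℕ), by omega⟩ : Fin s)
        · rw [hij, bflip_same, hbit]; rfl
        · rw [bflip_noteq _ _ _ hij, enc_low s g _ _ _ hi]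
          simp only [decide_eq_false_iff_not]
          intro he; exact hij (Fin.ext he)
      · intro he
        have h2 := congrFun (congrArg Prod.fst he) ⟨(j : ℕ), by omega⟩
        simp only [fvert] at h2
        rw [bflip_same, hbit] at h2
        exact absurd h2 (by simp)
      · show (fvert s t g w (j : ℕ)).2.2 = false
        simp only [fvert]
        simp; omega
      · show cubeAdj s _ (fvert s t g w (j : ℕ)).1
        have hkey : (fvert s t g w (j : ℕ)).1 =
            bflip (bflip (enc s g w (j : ℕ)) ⟨(j : ℕ), by omega⟩) ⟨(j : ℕ), by omega⟩ :=
          (bflip_bflip _ _).symm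
        by_cases hj1 : (j : ℕ) ≤ 1
        · exact Or.inl ⟨⟨(j : ℕ), by omega⟩, hj1, hkey⟩
        · refine Or.inr ⟨⟨(j : ℕ), by omega⟩, by simp only [Fin.val_mk]; omega, Or.inr ⟨hs, ?_, hkey⟩⟩
          show bflip (enc s g w (j : ℕ)) ⟨(j : ℕ), by omega⟩ ⟨0, hs⟩ = false
          rw [bflip_noteq _ _ _ (by simp only [ne_eq, Fin.mk.injEq]; omega),
            enc_low s g _ _ _ (by simp only [Fin.val_mk]; omega)]
          simp; omega

lemma A_eq (s t g : ℕ) (hg : g ≤ s) :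
    SA s t g = Set.range (fun w : Fin g → Bool => fvert s t g w (s - g + 1)) := by
  ext v
  constructor
  · rintro ⟨h1, h2, h3⟩
    refine ⟨fun i => v.1 ⟨(i : ℕ) + (s - g), by omega⟩, ?_⟩
    refine (mem_range_zero s t g hg h1 (s - g + 1) (by omega)).trans ?_
    refine Prod.ext rfl (Prod.ext (funext fun j => (h2 j).symm) ?_)
    show decide (s - g + 1 = s - g) = v.2.2
    rw [h3]; simp
  · rintro ⟨w, rfl⟩
    refine ⟨fun i hi => ?_, fun _ => rfl, ?_⟩
    · show enc s g w (s - g + 1) i = false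
      rw [enc_low s g _ _ _ hi]
      simp; omega
    · show decide (s - g + 1 = s - g) = false
      simp

lemma fN_inj (s t g : ℕ) (hg : g ≤ s) :
    Function.Injective (fun p : (Fin g → Bool) × Fin (s - g + 1) => fvert s t g p.1 (p.2 : ℕ)) := by
  rintro ⟨w, j⟩ ⟨w', j'⟩ h
  simp only [fvert, Prod.mk.injEq] at h
  obtain ⟨ha, -, hc⟩ := h
  have hw : w = w' := enc_w_eq s g hg ha
  have hjj : (j : ℕ) = (j' : ℕ) := by
    by_cases hj : (j : ℕ) = s - g
    · by_contra hne
      have hj' : (j' : ℕ) ≠ s - g := by omega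
      rw [hj] at hc
      simp [hj'] at hc
    · have hj' : (j' : ℕ) ≠ s - g := by
        intro he
        rw [he] at hc
        simp [hj] at hc
      have hjlt : (j : ℕ) < s - g := by have := j.isLt; omega
      have h2 := congrFun ha ⟨(j : ℕ), by omega⟩
      rw [enc_low s g _ _ _ hjlt, enc_low s g _ _ _ hjlt] at h2
      simpa using h2
  simp [Prod.ext_iff, hw, Fin.ext_iff, hjj]

lemma fA_inj (s t g : ℕ) (hg : g ≤ s) :
    Function.Injective (fun w : Fin g → Bool => fvert s t g w (s - g + 1)) := by
  intro w w' h
  exact enc_w_eq s g hg (congrArg Prod.fst h)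


/-- Cardinalities of the open and closed neighborhoods of the set A. -/
theorem stmt9 (s t g : ℕ) (hs : 1 ≤ s) (hst : s ≤ t) (hg : g ≤ s) :
    let A : Set (LeTQVert s t) :=
      {u | (∀ j : Fin s, (j : ℕ) < s - g → u.1 j = false) ∧
           (∀ j : Fin t, u.2.1 j = false) ∧ u.2.2 = false}
    (setNbhd (LeTQ s t) A).ncard = 2 ^ g * (s - g + 1) ∧
    (setNbhd (LeTQ s t) A ∪ A).ncard = 2 ^ g * (s - g + 2) := by
  intro A
  have hA : A = SA s t g := rfl
  have h1 : (setNbhd (LeTQ s t) (SA s t g)).ncard = 2 ^ g * (s - g + 1) := by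
    rw [nbhd_eq s t g hs hg, ← Set.image_univ,
      Set.ncard_image_of_injective _ (fN_inj s t g hg), Set.ncard_univ]
    simp [Nat.card_eq_fintype_card]
  have h2 : (SA s t g).ncard = 2 ^ g := by
    rw [A_eq s t g hg, ← Set.image_univ,
      Set.ncard_image_of_injective _ (fA_inj s t g hg), Set.ncard_univ]
    simp [Nat.card_eq_fintype_card]
  have hdisj : Disjoint (setNbhd (LeTQ s t) (SA s t g)) (SA s t g) :=
    Set.disjoint_left.mpr fun v hv => hv.1
  refine ⟨by rw [hA]; exact h1, ?_⟩
  rw [hA, Set.ncard_union_eq hdisj (Set.toFinite _) (Set.toFinite _), h1, h2]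
  ring
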